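/- Let p^m ≡ 3 (mod 4), α a nonzero non-square in F_{p^m}, α₀^{p^s} = α, γ^4 = -4α₀. The ring F_{p^m}[x]/⟨x^{4p^s}-α⟩ has exactly two maximal ideals, namely ⟨x²+γx+γ²/2⟩ and ⟨x²-γx+γ²/2⟩, and its set of nilpotent elements is exactly the ideal ⟨x^4 - α₀⟩. -/

import Mathlib

open Polynomial

/-- The ambient ring `F_{p^m}[x]/⟨xⁿ - α⟩` of `α`-constacyclic codes over `F_{p^m}`. -/
abbrev AK (K : Type) [Field K] (α : K) (n : ℕ) : Type :=
  K[X] ⧸ Ideal.span {(X : K[X]) ^ n - C α}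

/-- The canonical projection `F_{p^m}[x] → F_{p^m}[x]/⟨xⁿ - α⟩`. -/
noncomputable def mkA (K : Type) [Field K] (α : K) (n : ℕ) : K[X] →+* AK K α n :=
  Ideal.Quotient.mk _

/-- The quadratic `x² + γx + γ²/2` over `F_{p^m}`. -/
noncomputable def qK (K : Type) [Field K] (g : K) : K[X] :=
  X ^ 2 + C g * X + C (g ^ 2 / 2)

lemma qK_monic (K : Type) [Field K] (g : K) : (qK K g).Monic := by
  unfold qK; monicity!

lemma qK_natDegree (K : Type) [Field K] (g : K) : (qK K g).natDegree = 2 := by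
  unfold qK; compute_degree!

lemma qK_irreducible (K : Type) [Field K] [Fintype K]
    (h4 : Fintype.card K % 4 = 3) (h2 : (2 : K) ≠ 0) (g : K) (hg : g ≠ 0) :
    Irreducible (qK K g) := by
  have hmon := qK_monic K g
  have hdeg := qK_natDegree K g
  rw [hmon.irreducible_iff_roots_eq_zero_of_degree_le_three (by omega) (by omega)]
  rw [Multiset.eq_zero_iff_forall_notMem]
  intro c hc
  rw [mem_roots hmon.ne_zero, IsRoot.def] at hc
  simp only [qK, eval_add, eval_pow, eval_mul, eval_C, eval_X] at hc
  have hsq : ((2 * c + g) / g) ^ 2 = -1 := by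
    field_simp at hc ⊢
    linear_combination 2 * hc
  have : IsSquare (-1 : K) := ⟨(2 * c + g) / g, by rw [← hsq]; ring⟩
  rw [FiniteField.isSquare_neg_one_iff] at this
  exact this h4

theorem stmt15 (p s m : ℕ) (hp : p.Prime) (hodd : Odd p) (hs : 0 < s) (hm : 0 < m)
    (K : Type) [Field K] [Fintype K] (hK : Fintype.card K = p ^ m)
    (h3 : p ^ m % 4 = 3) (α : K) (hα : α ≠ 0) (hns : ¬ IsSquare α)
    (α₀ : K) (hα₀ : α₀ ^ p ^ s = α) (γ : K) (hγ : γ ^ 4 = -4 * α₀) :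
    (Ideal.span {mkA K α (4 * p ^ s) (qK K γ)} ≠
        Ideal.span {mkA K α (4 * p ^ s) (qK K (-γ))}) ∧
    (∀ M : Ideal (AK K α (4 * p ^ s)), M.IsMaximal ↔
        M = Ideal.span {mkA K α (4 * p ^ s) (qK K γ)} ∨
        M = Ideal.span {mkA K α (4 * p ^ s) (qK K (-γ))}) ∧
    ∀ a : AK K α (4 * p ^ s), IsNilpotent a ↔
        a ∈ Ideal.span {mkA K α (4 * p ^ s) (X ^ 4 - C α₀)} := by
  haveI : Fact p.Prime := ⟨hp⟩
  -- characteristic of K is p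
  haveI hcharK : CharP K p := by
    have h1 : CharP K (ringChar K) := ringChar.charP K
    obtain ⟨n, hrp, hcard⟩ := FiniteField.card K (ringChar K)
    have heq : p = ringChar K := by
      have hd : p ∣ ringChar K ^ (n : ℕ) := by
        rw [← hcard, hK]; exact dvd_pow_self p hm.ne'
      exact (Nat.prime_dvd_prime_iff_eq hp hrp).mp (hp.dvd_of_dvd_pow hd)
    rw [heq]; exact h1
  have h2 : (2 : K) ≠ 0 := by
    intro h
    have hd : (p : ℕ) ∣ 2 := by
      have := (CharP.cast_eq_zero_iff K p 2).mp (by exact_mod_cast h)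
      exact_mod_cast this
    have hp2 : p = 2 := (Nat.prime_dvd_prime_iff_eq hp Nat.prime_two).mp hd
    rw [hp2] at hodd
    exact (by norm_num : ¬ Odd 2) hodd
  have h4K : (4 : K) ≠ 0 := by
    intro h
    apply h2
    have : (2 : K) * 2 = 0 := by rw [← h]; norm_num
    rcases mul_eq_zero.mp this with h' | h' <;> exact h'
  have hα₀ne : α₀ ≠ 0 := by
    intro h; apply hα; rw [← hα₀, h, zero_pow (pow_ne_zero s hp.ne_zero)]
  have hγne : γ ≠ 0 := by
    intro h
    apply hα₀ne
    rw [h, zero_pow (by norm_num : (4 : ℕ) ≠ 0)] at hγ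
    rcases mul_eq_zero.mp hγ.symm with h' | h'
    · exact absurd h' (by simpa using h4K)
    · exact h'
  -- notation
  set n : ℕ := 4 * p ^ s with hn
  set f : K[X] := X ^ n - C α with hf
  set g : K[X] := X ^ 4 - C α₀ with hg
  set q₁ : K[X] := qK K γ with hq₁def
  set q₂ : K[X] := qK K (-γ) with hq₂def
  have hmq₁ := qK_monic K γ
  have hmq₂ := qK_monic K (-γ)
  have hcard34 : Fintype.card K % 4 = 3 := by rw [hK]; exact h3
  have hirr₁ : Irreducible q₁ := qK_irreducible K hcard34 h2 γ hγne
  have hirr₂ : Irreducible q₂ := qK_irreducible K hcard34 h2 (-γ) (neg_ne_zero.mpr hγne)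
  -- factorization g = q₁ * q₂
  have hfact : q₁ * q₂ = g := by
    have e1 : γ ^ 2 / 2 * 2 = γ ^ 2 := div_mul_cancel₀ _ h2
    have e2 : (γ ^ 2 / 2) ^ 2 = -α₀ := by
      field_simp
      linear_combination hγ
    have hc1 : (C (γ ^ 2 / 2) : K[X]) * 2 = C γ ^ 2 := by
      rw [show ((2 : K[X]) = C 2) from (map_ofNat C 2).symm, ← C_mul, ← C_pow, e1]
    have hc2 : (C (γ ^ 2 / 2) : K[X]) ^ 2 = -C α₀ := by
      rw [← C_pow, e2, C_neg]
    simp only [hq₁def, hq₂def, qK, neg_sq, C_neg, hg]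
    linear_combination (X : K[X]) ^ 2 * hc1 + hc2
  -- f = g ^ (p ^ s)
  have hgpow : g ^ p ^ s = f := by
    rw [hg, sub_pow_char_pow, ← pow_mul, ← C_pow, hα₀, hf, mul_comm 4 (p ^ s), hn,
      mul_comm 4 (p ^ s)]
  have hfne : f ≠ 0 := by
    have : f.natDegree = n := natDegree_X_pow_sub_C
    intro h
    rw [h, natDegree_zero] at this
    have h0 : 0 < n := Nat.mul_pos (by norm_num) (pow_pos hp.pos s)
    omega
  have hnpos : 0 < n := by
    rw [hn]; exact Nat.mul_pos (by norm_num) (pow_pos hp.pos s)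
  -- basic divisibilities
  have hq₁dvdg : q₁ ∣ g := ⟨q₂, hfact.symm⟩
  have hq₂dvdg : q₂ ∣ g := ⟨q₁, by rw [← hfact]; ring⟩
  have hgdvdf : g ∣ f := by
    rw [← hgpow]; exact dvd_pow_self g (pow_ne_zero s hp.ne_zero)
  have hq₁dvdf : q₁ ∣ f := hq₁dvdg.trans hgdvdf
  have hq₂dvdf : q₂ ∣ f := hq₂dvdg.trans hgdvdf
  have hq₁ne₂ : q₁ ≠ q₂ := by
    intro h
    have hc1 : q₁.coeff 1 = γ := by simp [hq₁def, qK, coeff_X_pow]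
    have hc2 : q₂.coeff 1 = -γ := by simp [hq₂def, qK, coeff_X_pow]
    have heq : γ = -γ := by
      have hco := congrArg (fun r : K[X] => r.coeff 1) h
      beta_reduce at hco
      rw [hc1, hc2] at hco
      exact hco
    have h2γ : (2 : K) * γ = 0 := by linear_combination heq
    rcases mul_eq_zero.mp h2γ with h' | h'
    · exact h2 h'
    · exact hγne h'
  have hnotunit₁ : ¬ IsUnit q₁ := hirr₁.not_isUnit
  have hnotunit₂ : ¬ IsUnit q₂ := hirr₂.not_isUnit
  have hq₁ndvd₂ : ¬ q₁ ∣ q₂ := by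
    rintro ⟨c, hc⟩
    rcases hirr₂.isUnit_or_isUnit hc with h | h
    · exact hnotunit₁ h
    · exact hq₁ne₂ (eq_of_monic_of_associated hmq₁ hmq₂
        ⟨h.unit, by rw [h.unit_spec]; exact hc.symm⟩)
  have hcop : IsCoprime q₁ q₂ := by
    by_contra h
    exact hq₁ndvd₂ (hirr₁.dvd_iff_not_isCoprime.mpr h)
  have hpr₁ : Prime q₁ := hirr₁.prime
  have hpr₂ : Prime q₂ := hirr₂.prime
  -- the quotient setup
  set I : Ideal K[X] := Ideal.span {f} with hI
  have hmk : mkA K α n = Ideal.Quotient.mk I := rfl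
  have hsurj : Function.Surjective (Ideal.Quotient.mk I) := Ideal.Quotient.mk_surjective
  have hker : RingHom.ker (Ideal.Quotient.mk I) = I := Ideal.mk_ker
  have hfI : f ∈ I := Ideal.mem_span_singleton_self f
  -- comap of mapped span
  have hcomap_map : ∀ r : K[X], r ∣ f →
      Ideal.comap (Ideal.Quotient.mk I) (Ideal.map (Ideal.Quotient.mk I) (Ideal.span {r}))
        = Ideal.span {r} := by
    intro r hr
    rw [Ideal.comap_map_of_surjective _ hsurj, ← RingHom.ker_eq_comap_bot, hker,
      sup_eq_left]
    rw [hI, Ideal.span_singleton_le_span_singleton]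
    exact hr
  have hmap_span : ∀ r : K[X],
      Ideal.map (Ideal.Quotient.mk I) (Ideal.span {r})
        = Ideal.span {Ideal.Quotient.mk I r} := by
    intro r
    rw [Ideal.map_span, Set.image_singleton]
  -- maximality of the images
  have hmax : ∀ r : K[X], Irreducible r → r ∣ f →
      (Ideal.span {Ideal.Quotient.mk I r}).IsMaximal := by
    intro r hr hrf
    rw [← hmap_span]
    rcases Ideal.map_eq_top_or_isMaximal_of_surjective _ hsurj
        (PrincipalIdealRing.isMaximal_of_irreducible hr) with htop | hmax
    · exfalso
      simp only [Ideal.submodule_span_eq] at htop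
      have hcm := hcomap_map r hrf
      rw [htop, Ideal.comap_top] at hcm
      exact hr.not_isUnit (Ideal.span_singleton_eq_top.mp hcm.symm)
    · exact hmax
  -- distinctness
  have hdist : Ideal.span {Ideal.Quotient.mk I q₁} ≠ Ideal.span {Ideal.Quotient.mk I q₂} := by
    intro h
    rw [← hmap_span, ← hmap_span] at h
    have := congrArg (Ideal.comap (Ideal.Quotient.mk I)) h
    rw [hcomap_map q₁ hq₁dvdf, hcomap_map q₂ hq₂dvdf] at this
    rw [Ideal.span_singleton_eq_span_singleton] at this
    exact hq₁ne₂ (eq_of_monic_of_associated hmq₁ hmq₂ this)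
  refine ⟨by rw [hmk]; exact hdist, ?_, ?_⟩
  · -- classification of maximal ideals
    intro M
    constructor
    · intro hM
      have hJmax : (Ideal.comap (Ideal.Quotient.mk I) M).IsMaximal :=
        Ideal.comap_isMaximal_of_surjective _ hsurj
      set J := Ideal.comap (Ideal.Quotient.mk I) M with hJ
      have hfJ : f ∈ J := by
        have hf0 : (Ideal.Quotient.mk I) f = 0 := by
          rw [Ideal.Quotient.eq_zero_iff_mem]; exact hfI
        show f ∈ Ideal.comap (Ideal.Quotient.mk I) M
        rw [Ideal.mem_comap, hf0]
        exact M.zero_mem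
      obtain ⟨r, hr⟩ : ∃ r, J = Ideal.span {r} :=
        (IsPrincipalIdealRing.principal J).principal
      have hrne : r ≠ 0 := by
        intro h
        rw [h] at hr
        rw [hr] at hfJ
        simp only [Ideal.span_singleton_eq_bot.mpr rfl, Ideal.mem_bot] at hfJ
        exact hfne hfJ
      have hrprime : Prime r := by
        rw [← Ideal.span_singleton_prime hrne, ← hr]
        exact hJmax.isPrime
      have hrf : r ∣ f := by
        rw [← Ideal.mem_span_singleton, ← hr]; exact hfJ
      have hrdvd : r ∣ q₁ ∨ r ∣ q₂ := by
        have : r ∣ q₁ ^ p ^ s * q₂ ^ p ^ s := by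
          rw [← mul_pow, hfact, hgpow]; exact hrf
        rcases hrprime.dvd_or_dvd this with h | h
        · exact Or.inl (hrprime.dvd_of_dvd_pow h)
        · exact Or.inr (hrprime.dvd_of_dvd_pow h)
      have hMeq : M = Ideal.map (Ideal.Quotient.mk I) J :=
        (Ideal.map_comap_of_surjective _ hsurj M).symm
      rcases hrdvd with h | h
      · left
        have : Ideal.span {r} = Ideal.span {q₁} := by
          rw [Ideal.span_singleton_eq_span_singleton]
          exact hrprime.irreducible.associated_of_dvd hirr₁ h
        rw [hmk, hMeq, hr, this, hmap_span]
      · right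
        have : Ideal.span {r} = Ideal.span {q₂} := by
          rw [Ideal.span_singleton_eq_span_singleton]
          exact hrprime.irreducible.associated_of_dvd hirr₂ h
        rw [hmk, hMeq, hr, this, hmap_span]
    · intro h
      rcases h with h | h <;> rw [h, hmk]
      · exact hmax q₁ hirr₁ hq₁dvdf
      · exact hmax q₂ hirr₂ hq₂dvdf
  · -- nilpotents
    intro a
    have hgnil : (Ideal.Quotient.mk I g) ^ p ^ s = 0 := by
      rw [← map_pow, hgpow, Ideal.Quotient.eq_zero_iff_mem]
      exact hfI
    constructor
    · rintro ⟨k, hk⟩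
      obtain ⟨u, rfl⟩ := hsurj a
      rw [← map_pow, Ideal.Quotient.eq_zero_iff_mem, hI, Ideal.mem_span_singleton] at hk
      have hq₁u : q₁ ∣ u := hpr₁.dvd_of_dvd_pow (hq₁dvdf.trans hk)
      have hq₂u : q₂ ∣ u := hpr₂.dvd_of_dvd_pow (hq₂dvdf.trans hk)
      have hgu : g ∣ u := by
        rw [← hfact]
        exact hcop.mul_dvd hq₁u hq₂u
      rw [hmk, Ideal.mem_span_singleton]
      exact map_dvd (Ideal.Quotient.mk I) hgu
    · intro ha
      rw [hmk, Ideal.mem_span_singleton] at ha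
      obtain ⟨c, hc⟩ := ha
      exact ⟨p ^ s, by rw [hc, mul_pow, hgnil, zero_mul]⟩
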